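/- If C and D are simple updown categories that are both evenly up-covered with the same sequence {u_n}, then C and D are isomorphic as updown categories. -/

import Mathlib

structure UDData where
  Obj : Type
  Hom : Obj → Obj → Type
  idm : ∀ p, Hom p p
  comp : ∀ {p q r : Obj}, Hom p q → Hom q r → Hom p r
  idm_comp : ∀ {p q : Obj} (f : Hom p q), comp (idm p) f = f
  comp_idm : ∀ {p q : Obj} (f : Hom p q), comp f (idm q) = f
  comp_assoc : ∀ {p q r s : Obj} (f : Hom p q) (g : Hom q r) (h : Hom r s),
    comp (comp f g) h = comp f (comp g h)
  rank : Obj → ℕ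
  zhat : Obj

namespace UDData

def cast {C : UDData} {p q q' : C.Obj} (h : q = q') (f : C.Hom p q) : C.Hom p q' := h ▸ f

def Chain (C : UDData) : ℕ → C.Obj → C.Obj → Type
  | 0, p, q => PLift (p = q)
  | n + 1, p, q => (r : C.Obj) × C.Chain n p r × {f : C.Hom r q // C.rank q = C.rank r + 1}

structure IsUpdown (C : UDData) : Prop where
  rank_finite : ∀ n : ℕ, {p : C.Obj | C.rank p = n}.Finite
  hom_finite : ∀ p q : C.Obj, Finite (C.Hom p q)
  rank_zhat : C.rank C.zhat = 0
  zhat_unique : ∀ p : C.Obj, C.rank p = 0 → p = C.zhat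
  from_zhat : ∀ p : C.Obj, Nonempty (C.Hom C.zhat p)
  hom_rank : ∀ p q : C.Obj, Nonempty (C.Hom p q) → C.rank p < C.rank q ∨ p = q
  aut_inv : ∀ (p : C.Obj) (f : C.Hom p p),
    ∃ g : C.Hom p p, C.comp f g = C.idm p ∧ C.comp g f = C.idm p
  factor : ∀ {p q : C.Obj} (f : C.Hom p q), C.rank p < C.rank q →
    ∃ (r : C.Obj) (g : C.Hom p r) (h : C.Hom r q),
      C.rank r = C.rank p + 1 ∧ C.comp g h = f
  pre_free : ∀ {p q : C.Obj}, C.rank q = C.rank p + 1 → ∀ (a : C.Hom p p) (f : C.Hom p q),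
    C.comp a f = f → a = C.idm p
  post_free : ∀ {p q : C.Obj}, C.rank q = C.rank p + 1 → ∀ (b : C.Hom q q) (f : C.Hom p q),
    C.comp f b = f → b = C.idm q

variable (C : UDData)

noncomputable def nAut (p : C.Obj) : ℕ := Nat.card (C.Hom p p)

noncomputable def u (p q : C.Obj) : ℕ := Nat.card (C.Hom p q) / C.nAut q

noncomputable def d (p q : C.Obj) : ℕ := Nat.card (C.Hom p q) / C.nAut p

noncomputable def uStep (p q : C.Obj) : ℕ := if C.rank q = C.rank p + 1 then C.u p q else 0

noncomputable def dStep (p q : C.Obj) : ℕ := if C.rank q = C.rank p + 1 then C.d p q else 0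

open Classical in
noncomputable def uext (C : UDData) : ℕ → C.Obj → C.Obj → ℕ
  | 0, p, q => if p = q then 1 else 0
  | n + 1, p, q => ∑ᶠ r : C.Obj, C.uext n p r * C.uStep r q

open Classical in
noncomputable def dext (C : UDData) : ℕ → C.Obj → C.Obj → ℕ
  | 0, p, q => if p = q then 1 else 0
  | n + 1, p, q => ∑ᶠ r : C.Obj, C.dext n p r * C.dStep r q

noncomputable def uE (p q : C.Obj) : ℕ := C.uext (C.rank q - C.rank p) p q

noncomputable def dE (p q : C.Obj) : ℕ := C.dext (C.rank q - C.rank p) p q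

def Univalent (C : UDData) : Prop := ∀ p : C.Obj, Subsingleton (C.Hom p p)

def Simple (C : UDData) : Prop :=
  (∀ p q : C.Obj, Subsingleton (C.Hom p q)) ∧
    ∀ (n : ℕ) (p q : C.Obj), Subsingleton (C.Chain n p q)

def EUC (C : UDData) (u : ℕ → ℕ) : Prop :=
  ∀ p : C.Obj, (∑ᶠ q : C.Obj, C.uStep p q) = u (C.rank p)

def EDC (C : UDData) (d : ℕ → ℕ) : Prop :=
  ∀ p : C.Obj, (∑ᶠ q : C.Obj, C.dStep q p) = d (C.rank p)

def Factorial (C : UDData) : Prop :=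
  ∀ p : C.Obj, (∑ᶠ q : C.Obj, C.dStep q p) = C.rank p

def prod (C D : UDData) : UDData where
  Obj := C.Obj × D.Obj
  Hom := fun p q => C.Hom p.1 q.1 × D.Hom p.2 q.2
  idm := fun p => (C.idm p.1, D.idm p.2)
  comp := fun f g => (C.comp f.1 g.1, D.comp f.2 g.2)
  idm_comp := by intro p q f; cases f; simp [C.idm_comp, D.idm_comp]
  comp_idm := by intro p q f; cases f; simp [C.comp_idm, D.comp_idm]
  comp_assoc := by intro p q r s f g h; simp [C.comp_assoc, D.comp_assoc]
  rank := fun p => C.rank p.1 + D.rank p.2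
  zhat := (C.zhat, D.zhat)

structure Mor (C D : UDData) where
  obj : C.Obj → D.Obj
  map : ∀ {p q : C.Obj}, C.Hom p q → D.Hom (obj p) (obj q)
  map_idm : ∀ p : C.Obj, map (C.idm p) = D.idm (obj p)
  map_comp : ∀ {p q r : C.Obj} (f : C.Hom p q) (g : C.Hom q r),
    map (C.comp f g) = D.comp (map f) (map g)
  rank_eq : ∀ p : C.Obj, D.rank (obj p) = C.rank p

def Mor.comp {C D E : UDData} (F : Mor C D) (G : Mor D E) : Mor C E where
  obj := fun p => G.obj (F.obj p)
  map := fun f => G.map (F.map f)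
  map_idm := by intro p; show G.map (F.map (C.idm p)) = _; rw [F.map_idm, G.map_idm]
  map_comp := by
    intro p q r f g
    show G.map (F.map (C.comp f g)) = E.comp (G.map (F.map f)) (G.map (F.map g))
    rw [F.map_comp, G.map_comp]
  rank_eq := by intro p; rw [G.rank_eq, F.rank_eq]

structure Mor.IsGood {C D : UDData} (F : Mor C D) : Prop where
  aut_inj : ∀ p : C.Obj, Function.Injective fun a : C.Hom p p => F.map a
  pre_quot_inj : ∀ {p q₁ q₂ : C.Obj} (f₁ : C.Hom p q₁) (f₂ : C.Hom p q₂),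
    C.rank q₁ = C.rank p + 1 → C.rank q₂ = C.rank p + 1 →
    ∀ h : F.obj q₁ = F.obj q₂,
      (∃ a : D.Hom (F.obj p) (F.obj p),
        D.comp a (UDData.cast h (F.map f₁)) = F.map f₂) →
      ∃ e : q₁ = q₂, ∃ a : C.Hom p p, C.comp a (UDData.cast e f₁) = f₂
  post_quot_inj : ∀ {p q₁ q₂ : C.Obj} (f₁ : C.Hom p q₁) (f₂ : C.Hom p q₂),
    C.rank q₁ = C.rank p + 1 → C.rank q₂ = C.rank p + 1 →
    ∀ h : F.obj q₁ = F.obj q₂,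
      (∃ b : D.Hom (F.obj q₂) (F.obj q₂),
        D.comp (UDData.cast h (F.map f₁)) b = F.map f₂) →
      ∃ e : q₁ = q₂, ∃ b : C.Hom q₂ q₂, C.comp (UDData.cast e f₁) b = f₂

def Mor.IsCovering {C' C : UDData} (F : Mor C' C) : Prop :=
  Function.Surjective F.obj ∧
    ∀ p q : C'.Obj, C'.rank q = C'.rank p + 1 →
      Function.Bijective fun x : (q' : {q' : C'.Obj // F.obj q' = F.obj q}) × C'.Hom p q'.1 =>
        UDData.cast x.1.2 (F.map x.2)

noncomputable def objCoeff (n : ℕ) : ℚ :=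
  ∑ᶠ p : C.Obj, if C.rank p = n then ((C.nAut p : ℚ))⁻¹ else 0

noncomputable def objGF : PowerSeries ℚ := PowerSeries.mk C.objCoeff

noncomputable def morGF : PowerSeries ℚ :=
  PowerSeries.mk fun n =>
    ∑ᶠ p : C.Obj, ∑ᶠ q : C.Obj,
      if C.rank p + C.rank q = n then (C.uStep p q : ℚ) * ((C.nAut p : ℚ))⁻¹ else 0

noncomputable def sqSub (f : PowerSeries ℚ) : PowerSeries ℚ :=
  PowerSeries.mk fun n => if 2 ∣ n then PowerSeries.coeff (R := ℚ) (n / 2) f else 0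

noncomputable def coverCard (n : ℕ) : ℕ := Nat.card ((q : C.Obj) × C.Chain n C.zhat q)

noncomputable def inprod (f g : C.Obj → ℚ) : ℚ := ∑ᶠ p : C.Obj, f p * g p * C.nAut p

noncomputable def Uop (f : C.Obj → ℚ) : C.Obj → ℚ := fun q => ∑ᶠ p : C.Obj, f p * C.uStep p q

noncomputable def Dop (f : C.Obj → ℚ) : C.Obj → ℚ := fun p => ∑ᶠ q : C.Obj, f q * C.dStep p q

end UDData

namespace UDAux

open UDData
open scoped Classical

def Cov (C : UDData) (p q : C.Obj) : Prop :=
  C.rank q = C.rank p + 1 ∧ Nonempty (C.Hom p q)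

variable {C D : UDData}

lemma hom_exists (hC : C.IsUpdown) (q : C.Obj) :
    ∀ k, k ≤ C.rank q → ∃ r, C.rank r = k ∧ Nonempty (C.Hom r q) := by
  intro k
  induction k with
  | zero => intro _; exact ⟨C.zhat, hC.rank_zhat, hC.from_zhat q⟩
  | succ k ih =>
    intro hk
    obtain ⟨r, hr, ⟨f⟩⟩ := ih (Nat.le_of_succ_le hk)
    have hlt : C.rank r < C.rank q := by omega
    obtain ⟨r', g, h, hr', -⟩ := hC.factor f hlt
    exact ⟨r', by omega, ⟨h⟩⟩

lemma chain_exists (hC : C.IsUpdown) :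
    ∀ n (p : C.Obj), C.rank p = n → Nonempty (C.Chain n C.zhat p) := by
  intro n
  induction n with
  | zero => intro p hp; exact ⟨⟨(hC.zhat_unique p hp).symm⟩⟩
  | succ n ih =>
    intro p hp
    obtain ⟨r, hr, ⟨f⟩⟩ := hom_exists hC p n (by omega)
    obtain ⟨c⟩ := ih r hr
    exact ⟨⟨r, c, ⟨f, by omega⟩⟩⟩

lemma parent_unique (hC : C.IsUpdown) (hCs : C.Simple) {p₁ p₂ q : C.Obj}
    (h₁ : Cov C p₁ q) (h₂ : Cov C p₂ q) : p₁ = p₂ := by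
  obtain ⟨hr₁, ⟨f₁⟩⟩ := h₁
  obtain ⟨hr₂, ⟨f₂⟩⟩ := h₂
  have hn : C.rank p₂ = C.rank p₁ := by omega
  obtain ⟨c₁⟩ := chain_exists hC (C.rank p₁) p₁ rfl
  obtain ⟨c₂⟩ := chain_exists hC (C.rank p₁) p₂ hn
  have hsub := hCs.2 (C.rank p₁ + 1) C.zhat q
  have heq : (⟨p₁, c₁, ⟨f₁, hr₁⟩⟩ : C.Chain (C.rank p₁ + 1) C.zhat q)
      = ⟨p₂, c₂, ⟨f₂, by omega⟩⟩ := hsub.allEq _ _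
  exact congrArg Sigma.fst heq

lemma uStep_eq (hC : C.IsUpdown) (hCs : C.Simple) (p q : C.Obj) :
    C.uStep p q = if Cov C p q then 1 else 0 := by
  have hfin : ∀ a b : C.Obj, Finite (C.Hom a b) := hC.hom_finite
  have haut : C.nAut q = 1 := by
    have : Finite (C.Hom q q) := hfin q q
    exact Nat.card_eq_one_iff_unique.mpr ⟨hCs.1 q q, ⟨C.idm q⟩⟩
  unfold UDData.uStep UDData.u
  rw [haut, Nat.div_one]
  by_cases hcov : Cov C p q
  · have h1 : Nat.card (C.Hom p q) = 1 := by
      have : Finite (C.Hom p q) := hfin p q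
      exact Nat.card_eq_one_iff_unique.mpr ⟨hCs.1 p q, hcov.2⟩
    simp [hcov, hcov.1, h1]
  · by_cases hr : C.rank q = C.rank p + 1
    · have hne : ¬Nonempty (C.Hom p q) := fun hne => hcov ⟨hr, hne⟩
      have : IsEmpty (C.Hom p q) := not_nonempty_iff.mp hne
      simp [hcov, hr, Nat.card_of_isEmpty]
    · simp [hcov, hr]

lemma children_finite (hC : C.IsUpdown) (p : C.Obj) : {q | Cov C p q}.Finite :=
  (hC.rank_finite (C.rank p + 1)).subset (fun q hq => hq.1)

lemma children_card {u : ℕ → ℕ} (hC : C.IsUpdown) (hCs : C.Simple) (hCu : C.EUC u)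
    (p : C.Obj) : Nat.card {q // Cov C p q} = u (C.rank p) := by
  have hfin := children_finite hC p
  have h1 : (∑ᶠ q : C.Obj, C.uStep p q) = u (C.rank p) := hCu p
  have h2 : (∑ᶠ q : C.Obj, C.uStep p q)
      = ∑ q ∈ hfin.toFinset, C.uStep p q := by
    apply finsum_eq_finset_sum_of_support_subset
    intro q hq
    simp only [Set.Finite.coe_toFinset, Set.mem_setOf_eq]
    by_contra hc
    exact hq (by rw [uStep_eq hC hCs, if_neg hc])
  have h3 : (∑ q ∈ hfin.toFinset, C.uStep p q) = hfin.toFinset.card := by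
    rw [Finset.card_eq_sum_ones]
    apply Finset.sum_congr rfl
    intro q hq
    simp only [uStep_eq hC hCs]
    rw [if_pos (show Cov C p q from hfin.mem_toFinset.mp hq)]
  have h4 : Nat.card {q // Cov C p q} = hfin.toFinset.card := by
    have h5 := Nat.card_coe_set_eq {q | Cov C p q}
    rw [Set.ncard_eq_toFinset_card _ hfin] at h5
    exact h5
  omega

lemma children_equiv_nonempty {u : ℕ → ℕ} (hC : C.IsUpdown) (hD : D.IsUpdown)
    (hCs : C.Simple) (hDs : D.Simple) (hCu : C.EUC u) (hDu : D.EUC u)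
    (p : C.Obj) (p' : D.Obj) (h : D.rank p' = C.rank p) :
    Nonempty ({q // Cov C p q} ≃ {q' // Cov D p' q'}) := by
  have : Finite {q // Cov C p q} := (children_finite hC p).to_subtype
  have : Finite {q' // Cov D p' q'} := (children_finite hD p').to_subtype
  apply Finite.card_eq.mp
  rw [children_card hC hCs hCu, children_card hD hDs hDu, h]

noncomputable def childEquiv {u : ℕ → ℕ} (hC : C.IsUpdown) (hD : D.IsUpdown)
    (hCs : C.Simple) (hDs : D.Simple) (hCu : C.EUC u) (hDu : D.EUC u)
    (p : C.Obj) (p' : D.Obj) (h : D.rank p' = C.rank p) :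
    {q // Cov C p q} ≃ {q' // Cov D p' q'} :=
  Classical.choice (children_equiv_nonempty hC hD hCs hDs hCu hDu p p' h)

noncomputable def sigmaToSlice (hC : C.IsUpdown) (hCs : C.Simple) (n : ℕ) :
    (Σ p : {p : C.Obj // C.rank p = n}, {q : C.Obj // Cov C p.1 q})
      ≃ {q : C.Obj // C.rank q = n + 1} :=
  Equiv.ofBijective (fun x => ⟨x.2.1, by rw [x.2.2.1, x.1.2]⟩) (by
    constructor
    · rintro ⟨⟨p₁, hp₁⟩, ⟨q₁, hc₁⟩⟩ ⟨⟨p₂, hp₂⟩, ⟨q₂, hc₂⟩⟩ h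
      have hq : q₁ = q₂ := congrArg Subtype.val h
      subst hq
      have hp : p₁ = p₂ := parent_unique hC hCs hc₁ hc₂
      subst hp
      rfl
    · rintro ⟨q, hq⟩
      obtain ⟨r, hr, hne⟩ := hom_exists hC q n (by omega)
      exact ⟨⟨⟨r, hr⟩, ⟨q, ⟨(by omega : C.rank q = C.rank r + 1), hne⟩⟩⟩, rfl⟩)

noncomputable def levelEquiv (hC : C.IsUpdown) (hD : D.IsUpdown)
    (hCs : C.Simple) (hDs : D.Simple) (u : ℕ → ℕ) (hCu : C.EUC u) (hDu : D.EUC u) :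
    ∀ n, {p : C.Obj // C.rank p = n} ≃ {p : D.Obj // D.rank p = n}
  | 0 => Equiv.ofBijective (fun _ => ⟨D.zhat, hD.rank_zhat⟩) (by
      constructor
      · rintro ⟨a, ha⟩ ⟨b, hb⟩ _
        exact Subtype.ext ((hC.zhat_unique a ha).trans (hC.zhat_unique b hb).symm)
      · rintro ⟨b, hb⟩
        exact ⟨⟨C.zhat, hC.rank_zhat⟩, Subtype.ext (hD.zhat_unique b hb).symm⟩)
  | n + 1 =>
      ((sigmaToSlice hC hCs n).symm.trans
        (Equiv.sigmaCongr (levelEquiv hC hD hCs hDs u hCu hDu n)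
          (fun p => childEquiv hC hD hCs hDs hCu hDu
            p.1 (levelEquiv hC hD hCs hDs u hCu hDu n p).1
            (by rw [(levelEquiv hC hD hCs hDs u hCu hDu n p).2, p.2])))).trans
        (sigmaToSlice hD hDs n)

variable (hC : C.IsUpdown) (hD : D.IsUpdown) (hCs : C.Simple) (hDs : D.Simple)
  (u : ℕ → ℕ) (hCu : C.EUC u) (hDu : D.EUC u)

lemma levelEquiv_cov_aux (n : ℕ)
    (x : Σ p : {p : C.Obj // C.rank p = n}, {q : C.Obj // Cov C p.1 q}) :
    Cov D (levelEquiv hC hD hCs hDs u hCu hDu n x.1).1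
      (levelEquiv hC hD hCs hDs u hCu hDu (n + 1) (sigmaToSlice hC hCs n x)).1 := by
  obtain ⟨x1, x2⟩ := x
  simp only [levelEquiv, Equiv.trans_apply, Equiv.symm_apply_apply]
  exact ((childEquiv hC hD hCs hDs hCu hDu
    x1.1 (levelEquiv hC hD hCs hDs u hCu hDu n x1).1
    (by rw [(levelEquiv hC hD hCs hDs u hCu hDu n x1).2, x1.2])) x2).2

lemma levelEquiv_cov (n : ℕ) (p q : C.Obj) (hp : C.rank p = n) (hq : C.rank q = n + 1)
    (hcov : Cov C p q) :
    Cov D (levelEquiv hC hD hCs hDs u hCu hDu n ⟨p, hp⟩).1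
      (levelEquiv hC hD hCs hDs u hCu hDu (n + 1) ⟨q, hq⟩).1 := by
  have hfx := (sigmaToSlice hC hCs n).apply_symm_apply ⟨q, hq⟩
  set x := (sigmaToSlice hC hCs n).symm ⟨q, hq⟩ with hx
  have hx2 : x.2.1 = q := congrArg Subtype.val hfx
  have hcov' : Cov C x.1.1 q := hx2 ▸ x.2.2
  have hx1 : x.1 = ⟨p, hp⟩ := Subtype.ext (parent_unique hC hCs hcov' hcov)
  have haux := levelEquiv_cov_aux hC hD hCs hDs u hCu hDu n x
  rw [hx1, hfx] at haux
  exact haux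


lemma levelEquiv_cast {m n : ℕ} (h : m = n) (x : C.Obj)
    (hx : C.rank x = m) (hx' : C.rank x = n) :
    (levelEquiv hC hD hCs hDs u hCu hDu m ⟨x, hx⟩).1
      = (levelEquiv hC hD hCs hDs u hCu hDu n ⟨x, hx'⟩).1 := by subst h; rfl

lemma levelEquiv_symm_cast {m n : ℕ} (h : m = n) (x : D.Obj)
    (hx : D.rank x = m) (hx' : D.rank x = n) :
    ((levelEquiv hC hD hCs hDs u hCu hDu m).symm ⟨x, hx⟩).1
      = ((levelEquiv hC hD hCs hDs u hCu hDu n).symm ⟨x, hx'⟩).1 := by subst h; rfl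

end UDAux

theorem simple_evenly_upcovered_unique (C D : UDData) (hC : C.IsUpdown) (hD : D.IsUpdown)
    (hCs : C.Simple) (hDs : D.Simple) (u : ℕ → ℕ) (hCu : C.EUC u) (hDu : D.EUC u) :
    ∃ φ : C.Obj → D.Obj, Function.Bijective φ ∧ (∀ p, D.rank (φ p) = C.rank p) ∧
      ∀ p q : C.Obj,
        (C.rank q = C.rank p + 1 ∧ Nonempty (C.Hom p q)) ↔
        (D.rank (φ q) = D.rank (φ p) + 1 ∧ Nonempty (D.Hom (φ p) (φ q))) := by
  classical
  set e := UDAux.levelEquiv hC hD hCs hDs u hCu hDu with he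
  set φ : C.Obj → D.Obj := fun p => (e (C.rank p) ⟨p, rfl⟩).1 with hφ
  have hrankφ : ∀ p, D.rank (φ p) = C.rank p := fun p => (e (C.rank p) ⟨p, rfl⟩).2
  set ψ : D.Obj → C.Obj := fun q => ((e (D.rank q)).symm ⟨q, rfl⟩).1 with hψ
  have hrankψ : ∀ q, C.rank (ψ q) = D.rank q := fun q => ((e (D.rank q)).symm ⟨q, rfl⟩).2
  have hleft : ∀ p, ψ (φ p) = p := by
    intro p
    have h1 : ψ (φ p) = ((e (C.rank p)).symm ⟨φ p, hrankφ p⟩).1 :=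
      UDAux.levelEquiv_symm_cast hC hD hCs hDs u hCu hDu (hrankφ p) (φ p) rfl (hrankφ p)
    rw [h1]
    have h2 : (⟨φ p, hrankφ p⟩ : {x : D.Obj // D.rank x = C.rank p})
        = e (C.rank p) ⟨p, rfl⟩ := Subtype.ext rfl
    rw [h2, Equiv.symm_apply_apply]
  have hright : ∀ q, φ (ψ q) = q := by
    intro q
    have h1 : φ (ψ q) = (e (D.rank q) ⟨ψ q, hrankψ q⟩).1 :=
      UDAux.levelEquiv_cast hC hD hCs hDs u hCu hDu (hrankψ q) (ψ q) rfl (hrankψ q)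
    rw [h1]
    have h2 : (⟨ψ q, hrankψ q⟩ : {x : C.Obj // C.rank x = D.rank q})
        = (e (D.rank q)).symm ⟨q, rfl⟩ := Subtype.ext rfl
    rw [h2, Equiv.apply_symm_apply]
  refine ⟨φ, Function.bijective_iff_has_inverse.mpr ⟨ψ, hleft, hright⟩, hrankφ, ?_⟩
  intro p q
  constructor
  · rintro ⟨hr, hne⟩
    have hcov := UDAux.levelEquiv_cov hC hD hCs hDs u hCu hDu (C.rank p) p q rfl hr ⟨hr, hne⟩
    have hq : φ q = (e (C.rank p + 1) ⟨q, hr⟩).1 :=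
      UDAux.levelEquiv_cast hC hD hCs hDs u hCu hDu hr q rfl hr
    rw [hq]
    exact hcov
  · rintro ⟨hr', hne'⟩
    have hr : C.rank q = C.rank p + 1 := by rw [hrankφ, hrankφ] at hr'; exact hr'
    obtain ⟨r, hrk, hneC⟩ := UDAux.hom_exists hC q (C.rank p) (by omega)
    have hcovC : UDAux.Cov C r q := ⟨by omega, hneC⟩
    have hcovD := UDAux.levelEquiv_cov hC hD hCs hDs u hCu hDu (C.rank p) r q hrk hr hcovC
    have hq : φ q = (e (C.rank p + 1) ⟨q, hr⟩).1 :=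
      UDAux.levelEquiv_cast hC hD hCs hDs u hCu hDu hr q rfl hr
    have hcovD' : UDAux.Cov D (φ p) (φ q) := ⟨hr', hne'⟩
    rw [hq] at hcovD'
    have hval : (e (C.rank p) ⟨r, hrk⟩).1 = (e (C.rank p) ⟨p, rfl⟩).1 :=
      UDAux.parent_unique hD hDs hcovD hcovD'
    have : r = p := congrArg Subtype.val ((e (C.rank p)).injective (Subtype.ext hval))
    subst this
    exact ⟨hr, hneC⟩
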